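/- Fix α > 0, a period p ∈ ℕ with p ≥ 1, and an integer 0 ≤ q < p, and set w_j = (1+α)^{⌊(j-1)/p⌋} for j ≥ 1. Then lim_{n→∞} ( Σ_{j=1}^{np+q} w_j² ) / ( Σ_{j=1}^{np+q} w_j )² = (α/(2+α)) · ( p + α(2+α) q ) / ( p + α q )². This limit equals the (R-normalized) residual covariance of the regularized particle filter mean around the true state when resampling with bandwidth factor α every p-th step. -/

import Mathlib

open Finset Filter

lemma aux_tail (r : ℝ) (p : ℕ) (n q : ℕ) (hq : q ≤ p) :
    ∑ j ∈ Ico (n * p) (n * p + q), r ^ (j / p) = q * r ^ n := by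
  have h : ∀ j ∈ Ico (n * p) (n * p + q), r ^ (j / p) = r ^ n := by
    intro j hj
    rw [mem_Ico] at hj
    have : j / p = n :=
      Nat.div_eq_of_lt_le hj.1 (lt_of_lt_of_le hj.2 (by rw [add_mul, one_mul]; omega))
    rw [this]
  rw [Finset.sum_congr rfl h, Finset.sum_const, Nat.card_Ico]
  simp [nsmul_eq_mul]

lemma aux_sum_block (r : ℝ) (p : ℕ) :
    ∀ n q, q ≤ p → ∑ j ∈ range (n * p + q), r ^ (j / p) =
      p * ∑ k ∈ range n, r ^ k + q * r ^ n := by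
  intro n
  induction n with
  | zero =>
    intro q hq
    have := aux_tail r p 0 q hq
    simpa using this
  | succ n ih =>
    intro q hq
    have hsplit : (n + 1) * p + q = (n * p + p) + q := by ring
    rw [hsplit, range_eq_Ico,
      ← Finset.sum_Ico_consecutive (fun j => r ^ (j / p)) (Nat.zero_le (n * p + p))
        (Nat.le_add_right _ q)]
    have h1 : ∑ j ∈ Ico 0 (n * p + p), r ^ (j / p) =
        p * ∑ k ∈ range n, r ^ k + p * r ^ n := by
      rw [← range_eq_Ico]; exact ih p le_rfl
    have h2 : ∑ j ∈ Ico (n * p + p) (n * p + p + q), r ^ (j / p) = q * r ^ (n + 1) := by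
      have := aux_tail r p (n + 1) q hq
      rw [show (n + 1) * p = n * p + p by ring] at this
      exact this
    rw [h1, h2, geom_sum_succ']
    ring

lemma aux_tendsto (r : ℝ) (hr : 1 < r) (c d : ℝ) :
    Tendsto (fun n : ℕ => (c * ∑ k ∈ range n, r ^ k + d * r ^ n) * ((r ^ n)⁻¹))
      atTop (nhds (c / (r - 1) + d)) := by
  have hr0 : (0:ℝ) < r := lt_trans zero_lt_one hr
  have hrne : r ≠ 1 := ne_of_gt hr
  have heq : ∀ n : ℕ, (c * ∑ k ∈ range n, r ^ k + d * r ^ n) * ((r ^ n)⁻¹)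
      = c * (1 - (r⁻¹) ^ n) / (r - 1) + d := by
    intro n
    rw [geom_sum_eq hrne, inv_pow]
    have hpow : (r : ℝ) ^ n ≠ 0 := pow_ne_zero _ (ne_of_gt hr0)
    have hrs : r - 1 ≠ 0 := sub_ne_zero.mpr hrne
    field_simp
  simp only [heq]
  have h0 : Tendsto (fun n : ℕ => (r⁻¹) ^ n) atTop (nhds 0) := by
    apply tendsto_pow_atTop_nhds_zero_of_lt_one
    · positivity
    · rw [inv_lt_one_iff₀]; right; exact hr
  have : Tendsto (fun n : ℕ => c * (1 - (r⁻¹) ^ n) / (r - 1) + d) atTop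
      (nhds (c * (1 - 0) / (r - 1) + d)) := by
    apply Tendsto.add _ tendsto_const_nhds
    apply Tendsto.div_const
    exact (tendsto_const_nhds.sub h0).const_mul c
  simpa using this

theorem stmt_6 (α : ℝ) (hα : 0 < α) (p : ℕ) (hp : 1 ≤ p) (q : ℕ) (hq : q < p) :
    Tendsto (fun n =>
        (∑ j ∈ Icc 1 (n * p + q), ((1 + α) ^ ((j - 1) / p)) ^ 2) /
          (∑ j ∈ Icc 1 (n * p + q), (1 + α) ^ ((j - 1) / p)) ^ 2) atTop
      (nhds ((α / (2 + α)) * (((p : ℝ) + α * (2 + α) * q) / ((p : ℝ) + α * q) ^ 2))) := by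
  set r : ℝ := 1 + α with hr_def
  have hr1 : 1 < r := by simp [hr_def]; linarith
  have hr0 : (0:ℝ) < r := lt_trans zero_lt_one hr1
  set β : ℝ := r ^ 2 with hβ_def
  have hβ1 : 1 < β := by
    rw [hβ_def]; nlinarith
  -- rewrite sums over Icc to sums over range
  have hicc : ∀ (f : ℕ → ℝ) (N : ℕ), ∑ j ∈ Icc 1 N, f ((j - 1) / p) = ∑ j ∈ range N, f (j / p) := by
    intro f N
    rw [← Finset.Ico_add_one_right_eq_Icc, Finset.sum_Ico_eq_sum_range]
    simp
  have hA : ∀ n, ∑ j ∈ Icc 1 (n * p + q), ((1 + α) ^ ((j - 1) / p)) ^ 2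
      = (p : ℝ) * ∑ k ∈ range n, β ^ k + q * β ^ n := by
    intro n
    have h1 : ∀ j : ℕ, ((1 + α) ^ j) ^ 2 = β ^ j := by
      intro j; rw [hβ_def, hr_def, ← pow_mul, ← pow_mul, Nat.mul_comm]
    calc ∑ j ∈ Icc 1 (n * p + q), ((1 + α) ^ ((j - 1) / p)) ^ 2
        = ∑ j ∈ Icc 1 (n * p + q), β ^ ((j - 1) / p) := by
          exact Finset.sum_congr rfl fun j _ => h1 _
      _ = ∑ j ∈ range (n * p + q), β ^ (j / p) := hicc (fun m => β ^ m) _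
      _ = (p : ℝ) * ∑ k ∈ range n, β ^ k + q * β ^ n := aux_sum_block β p n q (le_of_lt hq)
  have hB : ∀ n, ∑ j ∈ Icc 1 (n * p + q), (1 + α) ^ ((j - 1) / p)
      = (p : ℝ) * ∑ k ∈ range n, r ^ k + q * r ^ n := by
    intro n
    calc ∑ j ∈ Icc 1 (n * p + q), (1 + α) ^ ((j - 1) / p)
        = ∑ j ∈ range (n * p + q), r ^ (j / p) := hicc (fun m => r ^ m) _
      _ = (p : ℝ) * ∑ k ∈ range n, r ^ k + q * r ^ n := aux_sum_block r p n q (le_of_lt hq)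
  -- the rescaled expression
  have key : ∀ n : ℕ,
      (∑ j ∈ Icc 1 (n * p + q), ((1 + α) ^ ((j - 1) / p)) ^ 2) /
          (∑ j ∈ Icc 1 (n * p + q), (1 + α) ^ ((j - 1) / p)) ^ 2
      = (((p : ℝ) * ∑ k ∈ range n, β ^ k + q * β ^ n) * ((β ^ n)⁻¹)) /
          ((((p : ℝ) * ∑ k ∈ range n, r ^ k + q * r ^ n) * ((r ^ n)⁻¹)) ^ 2) := by
    intro n
    rw [hA n, hB n]
    have hβ0 : (0:ℝ) < β := lt_trans zero_lt_one hβ1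
    have hβpow : (β : ℝ) ^ n ≠ 0 := pow_ne_zero _ (ne_of_gt hβ0)
    have hβeq : ((r : ℝ) ^ n) ^ 2 = β ^ n := by
      rw [hβ_def, ← pow_mul, ← pow_mul, Nat.mul_comm]
    rw [mul_pow, inv_pow, hβeq]
    exact (mul_div_mul_right _ _ (inv_ne_zero hβpow)).symm
  -- limits
  have hp0 : (0:ℝ) < p := by exact_mod_cast hp
  have hne : ((p : ℝ) / (r - 1) + q) ^ 2 ≠ 0 := by
    have : (0:ℝ) < (p : ℝ) / (r - 1) + q := by
      have : (0:ℝ) < r - 1 := by linarith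
      positivity
    positivity
  have htd :
      Tendsto (fun n : ℕ =>
        (((p : ℝ) * ∑ k ∈ range n, β ^ k + q * β ^ n) * ((β ^ n)⁻¹)) /
          ((((p : ℝ) * ∑ k ∈ range n, r ^ k + q * r ^ n) * ((r ^ n)⁻¹)) ^ 2)) atTop
        (nhds (((p : ℝ) / (β - 1) + q) / (((p : ℝ) / (r - 1) + q) ^ 2))) :=
    (aux_tendsto β hβ1 p q).div ((aux_tendsto r hr1 p q).pow 2) hne
  have hlim : ((p : ℝ) / (β - 1) + q) / (((p : ℝ) / (r - 1) + q) ^ 2)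
      = (α / (2 + α)) * (((p : ℝ) + α * (2 + α) * q) / ((p : ℝ) + α * q) ^ 2) := by
    have h1 : β - 1 = α * (2 + α) := by rw [hβ_def, hr_def]; ring
    have h2 : r - 1 = α := by rw [hr_def]; ring
    rw [h1, h2]
    have hαne : α ≠ 0 := ne_of_gt hα
    have h2α : (2:ℝ) + α ≠ 0 := by linarith
    have hpq : (p : ℝ) + α * q ≠ 0 := by positivity
    field_simp
  rw [← hlim]
  exact Tendsto.congr (fun n => (key n).symm) htd
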